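/- The linear map ν : A ⋈ H → A ♮ H given by ν(φ ⋈ h) = (φ·h₂) ♮ h₁ is an algebra isomorphism from the diagonal crossed product to the L-R-smash product, with inverse ν⁻¹(φ ♮ h) = (φ·S⁻¹(h₂)) ⋈ h₁. -/

import Mathlib

open scoped TensorProduct
open Finset


section AuxBasic

private lemma list_sum_range {β : Type} [AddCommMonoid β] (l : List β) :
    l.sum = ∑ i ∈ Finset.range l.length, l.getD i 0 := by
  induction l with
  | nil => simp
  | cons a t ih =>
      rw [List.sum_cons, ih]
      rw [show (a :: t).length = t.length + 1 from rfl, Finset.sum_range_succ']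
      simp [add_comm]

lemma exists_rep {k M N : Type} [CommSemiring k] [AddCommMonoid M] [AddCommMonoid N]
    [Module k M] [Module k N] (x : M ⊗[k] N) :
    ∃ (s : Finset ℕ) (f : ℕ → M) (g : ℕ → N), x = ∑ i ∈ s, f i ⊗ₜ[k] g i := by
  obtain ⟨S, hS⟩ := TensorProduct.exists_finset x
  refine ⟨Finset.range S.toList.length,
    fun i => ((S.toList.getD i (0, 0)).1), fun i => ((S.toList.getD i (0, 0)).2), ?_⟩
  have h1 : x = (S.toList.map fun p => p.1 ⊗ₜ[k] p.2).sum := by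
    rw [hS, ← Finset.sum_map_toList]
  rw [h1, list_sum_range, List.length_map]
  refine Finset.sum_congr rfl fun i hi => ?_
  simp only [Finset.mem_range] at hi
  simp only [List.getD_eq_getElem?_getD, List.getElem?_map, List.getElem?_eq_getElem hi,
    Option.map_some, Option.getD_some]

lemma flatten_double (s : Finset ℕ) (t : ℕ → Finset ℕ) :
    ∃ (w : Finset ℕ) (a b : ℕ → ℕ),
      ∀ {M : Type} [AddCommMonoid M] (v : ℕ → ℕ → M),
        ∑ i ∈ s, ∑ j ∈ t i, v i j = ∑ n ∈ w, v (a n) (b n) := by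
  refine ⟨s.biUnion (fun i => (t i).image (fun j => Nat.pair i j)),
    fun n => (Nat.unpair n).1, fun n => (Nat.unpair n).2, ?_⟩
  intro M _ v
  rw [Finset.sum_biUnion]
  · refine Finset.sum_congr rfl fun i _ => ?_
    rw [Finset.sum_image (by intro x _ y _ hxy; simpa using (Nat.pair_eq_pair.mp hxy).2)]
    refine Finset.sum_congr rfl fun j _ => ?_
    simp [Nat.unpair_pair]
  · intro i _ i' _ hii'
    simp only [Function.onFun, Finset.disjoint_left]
    intro n hn hn'
    simp only [Finset.mem_image] at hn hn'
    obtain ⟨j, _, rfl⟩ := hn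
    obtain ⟨j', _, hj'⟩ := hn'
    exact hii' (by simpa using (Nat.pair_eq_pair.mp hj'.symm).1)

end AuxBasic

section Hopf
variable {k H : Type} [Field k] [Ring H] [HopfAlgebra k H]

local notation "Δ" => (Coalgebra.comul (R := k) (A := H))
local notation "ε" => (Coalgebra.counit (R := k) (A := H))
local notation "𝒮" => (HopfAlgebra.antipode (R := k) (A := H))

lemma rep_counit_right (h : H) (s : Finset ℕ) (f g : ℕ → H)
    (hrep : Δ h = ∑ i ∈ s, f i ⊗ₜ[k] g i) :
    ∑ i ∈ s, ε (g i) • f i = h := by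
  have h1 := Coalgebra.lTensor_counit_comul (R := k) h
  rw [hrep, map_sum] at h1
  have h2 := congrArg (TensorProduct.rid k H) h1
  simpa [map_sum] using h2

lemma rep_counit_left (h : H) (s : Finset ℕ) (f g : ℕ → H)
    (hrep : Δ h = ∑ i ∈ s, f i ⊗ₜ[k] g i) :
    ∑ i ∈ s, ε (f i) • g i = h := by
  have h1 := Coalgebra.rTensor_counit_comul (R := k) h
  rw [hrep, map_sum] at h1
  have h2 := congrArg (TensorProduct.lid k H) h1
  simpa [map_sum] using h2

lemma rep_antipode_mul (h : H) (s : Finset ℕ) (f g : ℕ → H)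
    (hrep : Δ h = ∑ i ∈ s, f i ⊗ₜ[k] g i) :
    ∑ i ∈ s, 𝒮 (f i) * g i = ε h • 1 :=
  HopfAlgebra.sum_antipode_mul_eq_smul (R := k) ⟨s, f, g, hrep.symm⟩

lemma rep_mul_antipode (h : H) (s : Finset ℕ) (f g : ℕ → H)
    (hrep : Δ h = ∑ i ∈ s, f i ⊗ₜ[k] g i) :
    ∑ i ∈ s, f i * 𝒮 (g i) = ε h • 1 :=
  HopfAlgebra.sum_mul_antipode_eq_smul (R := k) ⟨s, f, g, hrep.symm⟩

lemma antipode_one' : 𝒮 (1 : H) = 1 := by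
  have h1 : Δ (1 : H) = ∑ i ∈ ({0} : Finset ℕ), (1 : H) ⊗ₜ[k] (1 : H) := by
    simp [Algebra.TensorProduct.one_def]
  have h2 := rep_antipode_mul (1 : H) {0} (fun _ => 1) (fun _ => 1) h1
  simpa using h2

lemma counit_antipode' (h : H) : ε (𝒮 h) = ε h := by
  obtain ⟨s, f, g, hrep⟩ := exists_rep (Δ h)
  have h3 := congrArg ε (rep_antipode_mul h s f g hrep)
  rw [map_sum, map_smul] at h3
  simp only [Bialgebra.counit_mul, Bialgebra.counit_one, smul_eq_mul, mul_one] at h3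
  calc ε (𝒮 h) = ε (𝒮 (∑ i ∈ s, ε (g i) • f i)) := by rw [rep_counit_right h s f g hrep]
  _ = ∑ i ∈ s, ε (𝒮 (f i)) * ε (g i) := by
      rw [map_sum, map_sum]
      refine Finset.sum_congr rfl fun i _ => ?_
      rw [map_smul, map_smul, smul_eq_mul, mul_comm]
  _ = ε h := h3

end Hopf
section MultiLin
variable {k : Type} [CommSemiring k]
variable {M1 M2 M3 M4 M5 N : Type}
variable [AddCommMonoid M1] [AddCommMonoid M2] [AddCommMonoid M3] [AddCommMonoid M4]
  [AddCommMonoid M5] [AddCommMonoid N]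
variable [Module k M1] [Module k M2] [Module k M3] [Module k M4] [Module k M5] [Module k N]

noncomputable def lift3 (f : M1 →ₗ[k] M2 →ₗ[k] M3 →ₗ[k] N) : M1 ⊗[k] (M2 ⊗[k] M3) →ₗ[k] N :=
  TensorProduct.lift ((TensorProduct.lift.equiv (RingHom.id k) M2 M3 N).toLinearMap ∘ₗ f)

@[simp] lemma lift3_tmul (f : M1 →ₗ[k] M2 →ₗ[k] M3 →ₗ[k] N) (a : M1) (b : M2) (c : M3) :
    lift3 f (a ⊗ₜ[k] (b ⊗ₜ[k] c)) = f a b c := by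
  simp [lift3, TensorProduct.lift.equiv]

noncomputable def lift4 (f : M1 →ₗ[k] M2 →ₗ[k] M3 →ₗ[k] M4 →ₗ[k] N) :
    M1 ⊗[k] (M2 ⊗[k] (M3 ⊗[k] M4)) →ₗ[k] N :=
  TensorProduct.lift ((TensorProduct.lift.equiv (RingHom.id k) M2 (M3 ⊗[k] M4) N).toLinearMap ∘ₗ
    (LinearMap.llcomp k M2 (M3 →ₗ[k] M4 →ₗ[k] N) (M3 ⊗[k] M4 →ₗ[k] N)
      (TensorProduct.lift.equiv (RingHom.id k) M3 M4 N).toLinearMap) ∘ₗ f)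

@[simp] lemma lift4_tmul (f : M1 →ₗ[k] M2 →ₗ[k] M3 →ₗ[k] M4 →ₗ[k] N)
    (a : M1) (b : M2) (c : M3) (d : M4) :
    lift4 f (a ⊗ₜ[k] (b ⊗ₜ[k] (c ⊗ₜ[k] d))) = f a b c d := by
  simp [lift4, TensorProduct.lift.equiv]

noncomputable def lift5 (f : M1 →ₗ[k] M2 →ₗ[k] M3 →ₗ[k] M4 →ₗ[k] M5 →ₗ[k] N) :
    M1 ⊗[k] (M2 ⊗[k] (M3 ⊗[k] (M4 ⊗[k] M5))) →ₗ[k] N :=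
  TensorProduct.lift ((TensorProduct.lift.equiv (RingHom.id k) M2 (M3 ⊗[k] (M4 ⊗[k] M5)) N).toLinearMap ∘ₗ
    (LinearMap.llcomp k M2 (M3 →ₗ[k] M4 →ₗ[k] M5 →ₗ[k] N) (M3 ⊗[k] (M4 ⊗[k] M5) →ₗ[k] N)
      ((TensorProduct.lift.equiv (RingHom.id k) M3 (M4 ⊗[k] M5) N).toLinearMap ∘ₗ
        (LinearMap.llcomp k M3 (M4 →ₗ[k] M5 →ₗ[k] N) (M4 ⊗[k] M5 →ₗ[k] N)
          (TensorProduct.lift.equiv (RingHom.id k) M4 M5 N).toLinearMap))) ∘ₗ f)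

@[simp] lemma lift5_tmul (f : M1 →ₗ[k] M2 →ₗ[k] M3 →ₗ[k] M4 →ₗ[k] M5 →ₗ[k] N)
    (a : M1) (b : M2) (c : M3) (d : M4) (e : M5) :
    lift5 f (a ⊗ₜ[k] (b ⊗ₜ[k] (c ⊗ₜ[k] (d ⊗ₜ[k] e)))) = f a b c d e := by
  simp [lift5, TensorProduct.lift.equiv]

noncomputable def mk3 (f : M1 → M2 → M3 → N)
    (ha1 : ∀ x x' y z, f (x + x') y z = f x y z + f x' y z)
    (hs1 : ∀ (c : k) x y z, f (c • x) y z = c • f x y z)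
    (ha2 : ∀ x y y' z, f x (y + y') z = f x y z + f x y' z)
    (hs2 : ∀ (c : k) x y z, f x (c • y) z = c • f x y z)
    (ha3 : ∀ x y z z', f x y (z + z') = f x y z + f x y z')
    (hs3 : ∀ (c : k) x y z, f x y (c • z) = c • f x y z) :
    M1 →ₗ[k] M2 →ₗ[k] M3 →ₗ[k] N where
  toFun x :=
  { toFun := fun y =>
    { toFun := fun z => f x y z
      map_add' := ha3 x y
      map_smul' := fun c z => hs3 c x y z }
    map_add' := fun y y' => by ext z; exact ha2 x y y' z
    map_smul' := fun c y => by ext z; exact hs2 c x y z }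
  map_add' := fun x x' => by ext y z; exact ha1 x x' y z
  map_smul' := fun c x => by ext y z; exact hs1 c x y z

@[simp] lemma mk3_apply (f : M1 → M2 → M3 → N) (ha1 hs1 ha2 hs2 ha3 hs3) (x y z) :
    mk3 (k := k) f ha1 hs1 ha2 hs2 ha3 hs3 x y z = f x y z := rfl

noncomputable def mk4 (f : M1 → M2 → M3 → M4 → N)
    (ha1 : ∀ x x' y z w, f (x + x') y z w = f x y z w + f x' y z w)
    (hs1 : ∀ (c : k) x y z w, f (c • x) y z w = c • f x y z w)
    (ha2 : ∀ x y y' z w, f x (y + y') z w = f x y z w + f x y' z w)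
    (hs2 : ∀ (c : k) x y z w, f x (c • y) z w = c • f x y z w)
    (ha3 : ∀ x y z z' w, f x y (z + z') w = f x y z w + f x y z' w)
    (hs3 : ∀ (c : k) x y z w, f x y (c • z) w = c • f x y z w)
    (ha4 : ∀ x y z w w', f x y z (w + w') = f x y z w + f x y z w')
    (hs4 : ∀ (c : k) x y z w, f x y z (c • w) = c • f x y z w) :
    M1 →ₗ[k] M2 →ₗ[k] M3 →ₗ[k] M4 →ₗ[k] N where
  toFun x :=
  { toFun := fun y =>
    { toFun := fun z =>
      { toFun := fun w => f x y z w
        map_add' := ha4 x y z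
        map_smul' := fun c w => hs4 c x y z w }
      map_add' := fun z z' => by ext w; exact ha3 x y z z' w
      map_smul' := fun c z => by ext w; exact hs3 c x y z w }
    map_add' := fun y y' => by ext z w; exact ha2 x y y' z w
    map_smul' := fun c y => by ext z w; exact hs2 c x y z w }
  map_add' := fun x x' => by ext y z w; exact ha1 x x' y z w
  map_smul' := fun c x => by ext y z w; exact hs1 c x y z w

@[simp] lemma mk4_apply (f : M1 → M2 → M3 → M4 → N) (ha1 hs1 ha2 hs2 ha3 hs3 ha4 hs4) (x y z w) :
    mk4 (k := k) f ha1 hs1 ha2 hs2 ha3 hs3 ha4 hs4 x y z w = f x y z w := rfl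

noncomputable def mk5 (f : M1 → M2 → M3 → M4 → M5 → N)
    (ha1 : ∀ x x' y z w v, f (x + x') y z w v = f x y z w v + f x' y z w v)
    (hs1 : ∀ (c : k) x y z w v, f (c • x) y z w v = c • f x y z w v)
    (ha2 : ∀ x y y' z w v, f x (y + y') z w v = f x y z w v + f x y' z w v)
    (hs2 : ∀ (c : k) x y z w v, f x (c • y) z w v = c • f x y z w v)
    (ha3 : ∀ x y z z' w v, f x y (z + z') w v = f x y z w v + f x y z' w v)
    (hs3 : ∀ (c : k) x y z w v, f x y (c • z) w v = c • f x y z w v)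
    (ha4 : ∀ x y z w w' v, f x y z (w + w') v = f x y z w v + f x y z w' v)
    (hs4 : ∀ (c : k) x y z w v, f x y z (c • w) v = c • f x y z w v)
    (ha5 : ∀ x y z w v v', f x y z w (v + v') = f x y z w v + f x y z w v')
    (hs5 : ∀ (c : k) x y z w v, f x y z w (c • v) = c • f x y z w v) :
    M1 →ₗ[k] M2 →ₗ[k] M3 →ₗ[k] M4 →ₗ[k] M5 →ₗ[k] N where
  toFun x :=
  { toFun := fun y =>
    { toFun := fun z =>
      { toFun := fun w =>
        { toFun := fun v => f x y z w v
          map_add' := ha5 x y z w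
          map_smul' := fun c v => hs5 c x y z w v }
        map_add' := fun w w' => by ext v; exact ha4 x y z w w' v
        map_smul' := fun c w => by ext v; exact hs4 c x y z w v }
      map_add' := fun z z' => by ext w v; exact ha3 x y z z' w v
      map_smul' := fun c z => by ext w v; exact hs3 c x y z w v }
    map_add' := fun y y' => by ext z w v; exact ha2 x y y' z w v
    map_smul' := fun c y => by ext z w v; exact hs2 c x y z w v }
  map_add' := fun x x' => by ext y z w v; exact ha1 x x' y z w v
  map_smul' := fun c x => by ext y z w v; exact hs1 c x y z w v

@[simp] lemma mk5_apply (f : M1 → M2 → M3 → M4 → M5 → N)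
    (ha1 hs1 ha2 hs2 ha3 hs3 ha4 hs4 ha5 hs5) (x y z w v) :
    mk5 (k := k) f ha1 hs1 ha2 hs2 ha3 hs3 ha4 hs4 ha5 hs5 x y z w v = f x y z w v := rfl

end MultiLin
section Coassoc
variable {k H : Type} [Field k] [Ring H] [HopfAlgebra k H]

local notation "Δ" => (Coalgebra.comul (R := k) (A := H))
local notation "ε" => (Coalgebra.counit (R := k) (A := H))
local notation "𝒮" => (HopfAlgebra.antipode (R := k) (A := H))

noncomputable def μH : H ⊗[k] H →ₗ[k] H ⊗[k] (H ⊗[k] H) :=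
  (TensorProduct.assoc k H H H).toLinearMap ∘ₗ LinearMap.rTensor H Δ

lemma μH_comp_comul : (μH (k := k) (H := H)) ∘ₗ Δ = (LinearMap.lTensor H Δ) ∘ₗ Δ := by
  rw [μH, LinearMap.comp_assoc]
  exact Coalgebra.coassoc

lemma μH_tmul (x y : H) (s : Finset ℕ) (c d : ℕ → H)
    (hx : Δ x = ∑ m ∈ s, c m ⊗ₜ[k] d m) :
    μH (x ⊗ₜ[k] y) = ∑ m ∈ s, c m ⊗ₜ[k] (d m ⊗ₜ[k] y) := by
  simp only [μH, LinearMap.comp_apply, LinearMap.rTensor_tmul, hx, LinearEquiv.coe_coe]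
  rw [TensorProduct.sum_tmul, map_sum]
  exact Finset.sum_congr rfl fun m _ => by rw [TensorProduct.assoc_tmul]

lemma lT_lT {P Q R' : Type} [AddCommMonoid P] [AddCommMonoid Q] [AddCommMonoid R']
    [Module k P] [Module k Q] [Module k R']
    (g : Q →ₗ[k] R') (f : P →ₗ[k] Q) (z : H ⊗[k] P) :
    (LinearMap.lTensor H g) ((LinearMap.lTensor H f) z)
      = (LinearMap.lTensor H (g ∘ₗ f)) z := by
  rw [LinearMap.lTensor_comp]; rfl

lemma Z_right (h : H) (s : Finset ℕ) (f g : ℕ → H)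
    (hrep : Δ h = ∑ i ∈ s, f i ⊗ₜ[k] g i)
    (t : ℕ → Finset ℕ) (p q : ℕ → ℕ → H)
    (hg : ∀ i ∈ s, Δ (g i) = ∑ j ∈ t i, p i j ⊗ₜ[k] q i j) :
    (LinearMap.lTensor H Δ) (Δ h) = ∑ i ∈ s, ∑ j ∈ t i, f i ⊗ₜ[k] (p i j ⊗ₜ[k] q i j) := by
  rw [hrep, map_sum]
  refine Finset.sum_congr rfl fun i hi => ?_
  rw [LinearMap.lTensor_tmul, hg i hi, TensorProduct.tmul_sum]

lemma Z_left (h : H) (s : Finset ℕ) (f g : ℕ → H)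
    (hrep : Δ h = ∑ i ∈ s, f i ⊗ₜ[k] g i)
    (w : ℕ → Finset ℕ) (u v : ℕ → ℕ → H)
    (hf : ∀ i ∈ s, Δ (f i) = ∑ n ∈ w i, u i n ⊗ₜ[k] v i n) :
    (LinearMap.lTensor H Δ) (Δ h) = ∑ i ∈ s, ∑ n ∈ w i, u i n ⊗ₜ[k] (v i n ⊗ₜ[k] g i) := by
  have h1 : (LinearMap.lTensor H Δ) (Δ h) = μH (k := k) (H := H) (Δ h) := by
    have := congrArg (fun F => F h) (μH_comp_comul (k := k) (H := H))
    simpa using this.symm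
  rw [h1, hrep, map_sum]
  refine Finset.sum_congr rfl fun i hi => ?_
  exact μH_tmul (f i) (g i) (w i) (u i) (v i) (hf i hi)

lemma coassoc4 (x : H) (s : Finset ℕ) (c d : ℕ → H)
    (hx : Δ x = ∑ j ∈ s, c j ⊗ₜ[k] d j)
    (e : ℕ → Finset ℕ) (α β : ℕ → ℕ → H)
    (hc : ∀ j ∈ s, Δ (c j) = ∑ n ∈ e j, α j n ⊗ₜ[k] β j n)
    (t' : ℕ → Finset ℕ) (p q : ℕ → ℕ → H)
    (hd : ∀ j ∈ s, Δ (d j) = ∑ m ∈ t' j, p j m ⊗ₜ[k] q j m)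
    (wβ : ℕ → ℕ → Finset ℕ) (ρ σ : ℕ → ℕ → ℕ → H)
    (hβ : ∀ j ∈ s, ∀ n ∈ e j, Δ (β j n) = ∑ m ∈ wβ j n, ρ j n m ⊗ₜ[k] σ j n m) :
    ∑ j ∈ s, ∑ n ∈ e j, ∑ m ∈ t' j, α j n ⊗ₜ[k] (β j n ⊗ₜ[k] (p j m ⊗ₜ[k] q j m))
      = ∑ j ∈ s, ∑ n ∈ e j, ∑ m ∈ wβ j n, α j n ⊗ₜ[k] (ρ j n m ⊗ₜ[k] (σ j n m ⊗ₜ[k] d j)) := by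
  set Z := (LinearMap.lTensor H Δ) (Δ x) with hZdef
  have hZ : Z = ∑ j ∈ s, ∑ n ∈ e j, α j n ⊗ₜ[k] (β j n ⊗ₜ[k] d j) :=
    Z_left x s c d hx e α β hc
  have key : (LinearMap.lTensor H (LinearMap.lTensor H Δ)) Z
      = (LinearMap.lTensor H (μH (k := k) (H := H))) Z := by
    rw [hZdef, lT_lT, lT_lT, μH_comp_comul]
  have e1 : (LinearMap.lTensor H (LinearMap.lTensor H Δ)) Z
      = ∑ j ∈ s, ∑ n ∈ e j, ∑ m ∈ t' j, α j n ⊗ₜ[k] (β j n ⊗ₜ[k] (p j m ⊗ₜ[k] q j m)) := by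
    rw [hZ, map_sum]
    refine Finset.sum_congr rfl fun j hj => ?_
    rw [map_sum]
    refine Finset.sum_congr rfl fun n hn => ?_
    rw [LinearMap.lTensor_tmul, LinearMap.lTensor_tmul, hd j hj, TensorProduct.tmul_sum,
      TensorProduct.tmul_sum]
  have e2 : (LinearMap.lTensor H (μH (k := k) (H := H))) Z
      = ∑ j ∈ s, ∑ n ∈ e j, ∑ m ∈ wβ j n, α j n ⊗ₜ[k] (ρ j n m ⊗ₜ[k] (σ j n m ⊗ₜ[k] d j)) := by
    rw [hZ, map_sum]
    refine Finset.sum_congr rfl fun j hj => ?_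
    rw [map_sum]
    refine Finset.sum_congr rfl fun n hn => ?_
    rw [LinearMap.lTensor_tmul, μH_tmul (β j n) (d j) (wβ j n) (ρ j n) (σ j n) (hβ j hj n hn),
      TensorProduct.tmul_sum]
  rw [← e1, ← e2, key]

lemma coassoc5 (h : H) (s : Finset ℕ) (f g : ℕ → H)
    (hrep : Δ h = ∑ i ∈ s, f i ⊗ₜ[k] g i)
    (t : ℕ → Finset ℕ) (p q : ℕ → ℕ → H)
    (hg : ∀ i ∈ s, Δ (g i) = ∑ j ∈ t i, p i j ⊗ₜ[k] q i j)
    (v : ℕ → ℕ → Finset ℕ) (c d : ℕ → ℕ → ℕ → H)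
    (hp : ∀ i ∈ s, ∀ j ∈ t i, Δ (p i j) = ∑ m ∈ v i j, c i j m ⊗ₜ[k] d i j m)
    (e₃ : ℕ → ℕ → ℕ → Finset ℕ) (α β : ℕ → ℕ → ℕ → ℕ → H)
    (hd : ∀ i ∈ s, ∀ j ∈ t i, ∀ m ∈ v i j,
      Δ (d i j m) = ∑ e ∈ e₃ i j m, α i j m e ⊗ₜ[k] β i j m e)
    (u : ℕ → ℕ → Finset ℕ) (a b : ℕ → ℕ → ℕ → H)
    (hq : ∀ i ∈ s, ∀ j ∈ t i, Δ (q i j) = ∑ n ∈ u i j, a i j n ⊗ₜ[k] b i j n) :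
    ∑ i ∈ s, ∑ j ∈ t i, ∑ m ∈ v i j, ∑ e ∈ e₃ i j m,
      f i ⊗ₜ[k] (c i j m ⊗ₜ[k] (α i j m e ⊗ₜ[k] (β i j m e ⊗ₜ[k] q i j)))
    = ∑ i ∈ s, ∑ j ∈ t i, ∑ m ∈ v i j, ∑ n ∈ u i j,
      f i ⊗ₜ[k] (c i j m ⊗ₜ[k] (d i j m ⊗ₜ[k] (a i j n ⊗ₜ[k] b i j n))) := by
  set W := (LinearMap.lTensor H (μH (k := k) (H := H))) ((LinearMap.lTensor H Δ) (Δ h)) with hWdef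
  have hW : W = ∑ i ∈ s, ∑ j ∈ t i, ∑ m ∈ v i j,
      f i ⊗ₜ[k] (c i j m ⊗ₜ[k] (d i j m ⊗ₜ[k] q i j)) := by
    rw [hWdef, Z_right h s f g hrep t p q hg, map_sum]
    refine Finset.sum_congr rfl fun i hi => ?_
    rw [map_sum]
    refine Finset.sum_congr rfl fun j hj => ?_
    rw [LinearMap.lTensor_tmul, μH_tmul (p i j) (q i j) (v i j) (c i j) (d i j) (hp i hi j hj),
      TensorProduct.tmul_sum]
  have key : (LinearMap.lTensor H (LinearMap.lTensor H (μH (k := k) (H := H)))) W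
      = (LinearMap.lTensor H (LinearMap.lTensor H (LinearMap.lTensor H Δ))) W := by
    have inner : (LinearMap.lTensor H (μH (k := k) (H := H))) ∘ₗ (μH (k := k) (H := H)) ∘ₗ Δ
        = (LinearMap.lTensor H (LinearMap.lTensor H Δ)) ∘ₗ (μH (k := k) (H := H)) ∘ₗ Δ := by
      rw [μH_comp_comul, ← LinearMap.comp_assoc, ← LinearMap.comp_assoc,
        ← LinearMap.lTensor_comp, ← LinearMap.lTensor_comp, μH_comp_comul]
    have hW2 : W = (LinearMap.lTensor H ((μH (k := k) (H := H)) ∘ₗ Δ)) (Δ h) := by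
      rw [hWdef, lT_lT]
    rw [hW2, lT_lT, lT_lT, inner]
  have e1 : (LinearMap.lTensor H (LinearMap.lTensor H (μH (k := k) (H := H)))) W
      = ∑ i ∈ s, ∑ j ∈ t i, ∑ m ∈ v i j, ∑ e ∈ e₃ i j m,
        f i ⊗ₜ[k] (c i j m ⊗ₜ[k] (α i j m e ⊗ₜ[k] (β i j m e ⊗ₜ[k] q i j))) := by
    rw [hW, map_sum]
    refine Finset.sum_congr rfl fun i hi => ?_
    rw [map_sum]
    refine Finset.sum_congr rfl fun j hj => ?_
    rw [map_sum]
    refine Finset.sum_congr rfl fun m hm => ?_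
    rw [LinearMap.lTensor_tmul, LinearMap.lTensor_tmul,
      μH_tmul (d i j m) (q i j) (e₃ i j m) (α i j m) (β i j m) (hd i hi j hj m hm),
      TensorProduct.tmul_sum, TensorProduct.tmul_sum]
  have e2 : (LinearMap.lTensor H (LinearMap.lTensor H (LinearMap.lTensor H Δ))) W
      = ∑ i ∈ s, ∑ j ∈ t i, ∑ m ∈ v i j, ∑ n ∈ u i j,
        f i ⊗ₜ[k] (c i j m ⊗ₜ[k] (d i j m ⊗ₜ[k] (a i j n ⊗ₜ[k] b i j n))) := by
    rw [hW, map_sum]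
    refine Finset.sum_congr rfl fun i hi => ?_
    rw [map_sum]
    refine Finset.sum_congr rfl fun j hj => ?_
    rw [map_sum]
    refine Finset.sum_congr rfl fun m hm => ?_
    rw [LinearMap.lTensor_tmul, LinearMap.lTensor_tmul, LinearMap.lTensor_tmul,
      hq i hi j hj, TensorProduct.tmul_sum, TensorProduct.tmul_sum, TensorProduct.tmul_sum]
  rw [← e1, ← e2, key]

end Coassoc
section Antipode2
variable {k H : Type} [Field k] [Ring H] [HopfAlgebra k H]

local notation "Δ" => (Coalgebra.comul (R := k) (A := H))
local notation "ε" => (Coalgebra.counit (R := k) (A := H))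
local notation "𝒮" => (HopfAlgebra.antipode (R := k) (A := H))

noncomputable def τS : H ⊗[k] H →ₗ[k] H ⊗[k] H :=
  (TensorProduct.comm k H H).toLinearMap ∘ₗ
    TensorProduct.map (HopfAlgebra.antipode (R := k)) (HopfAlgebra.antipode (R := k))

@[simp] lemma τS_tmul (x y : H) : τS (x ⊗ₜ[k] y) = 𝒮 y ⊗ₜ[k] 𝒮 x := by
  simp [τS]

noncomputable def Psi4 : H →ₗ[k] H →ₗ[k] H →ₗ[k] H →ₗ[k] (H ⊗[k] H) :=
  mk4 (fun w y z t => (w * 𝒮 t) ⊗ₜ[k] (y * 𝒮 z))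
    (by intros; simp [add_mul, TensorProduct.add_tmul])
    (by intros; simp [smul_mul_assoc, TensorProduct.smul_tmul'])
    (by intros; simp [add_mul, TensorProduct.tmul_add])
    (by intros; simp [smul_mul_assoc, TensorProduct.tmul_smul])
    (by intros; simp [map_add, mul_add, TensorProduct.tmul_add])
    (by intros; simp [map_smul, mul_smul_comm, TensorProduct.tmul_smul])
    (by intros; simp [map_add, mul_add, TensorProduct.add_tmul])
    (by intros; simp [map_smul, mul_smul_comm, TensorProduct.smul_tmul'])

@[simp] lemma Psi4_apply (w y z t : H) :
    Psi4 (k := k) w y z t = (w * 𝒮 t) ⊗ₜ[k] (y * 𝒮 z) := rfl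

noncomputable def Phi3 : H →ₗ[k] H →ₗ[k] H →ₗ[k] (H ⊗[k] H) :=
  mk3 (fun x y z => Δ (𝒮 x) * (Δ y * τS (Δ z)))
    (by intros; simp [map_add, add_mul])
    (by intros; simp [map_smul, smul_mul_assoc])
    (by intros; simp [map_add, add_mul, mul_add])
    (by intros; simp [map_smul, smul_mul_assoc, mul_smul_comm])
    (by intros; simp [map_add, mul_add])
    (by intros; simp [map_smul, mul_smul_comm])

@[simp] lemma Phi3_apply (x y z : H) :
    Phi3 (k := k) x y z = Δ (𝒮 x) * (Δ y * τS (Δ z)) := rfl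

lemma conv_mid (x : H) (s : Finset ℕ) (c d : ℕ → H)
    (hx : Δ x = ∑ j ∈ s, c j ⊗ₜ[k] d j) :
    ∑ j ∈ s, Δ (c j) * τS (Δ (d j)) = ε x • (1 : H ⊗[k] H) := by
  choose e α β hc using fun j => exists_rep (k := k) (Δ (c j))
  choose t' p q hd using fun j => exists_rep (k := k) (Δ (d j))
  choose wβ ρ σ hβ using fun j n => exists_rep (k := k) (Δ (β j n))
  have step1 : ∑ j ∈ s, Δ (c j) * τS (Δ (d j))
      = ∑ j ∈ s, ∑ n ∈ e j, ∑ m ∈ t' j,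
        (α j n * 𝒮 (q j m)) ⊗ₜ[k] (β j n * 𝒮 (p j m)) := by
    refine Finset.sum_congr rfl fun j _ => ?_
    rw [hc j, hd j, map_sum, Finset.sum_mul_sum]
    refine Finset.sum_congr rfl fun n _ => ?_
    refine Finset.sum_congr rfl fun m _ => ?_
    rw [τS_tmul, Algebra.TensorProduct.tmul_mul_tmul]
  have c4 := coassoc4 x s c d hx e α β (fun j _ => hc j) t' p q (fun j _ => hd j)
    wβ ρ σ (fun j _ n _ => hβ j n)
  have step2 := congrArg (lift4 (Psi4 (k := k) (H := H))) c4
  simp only [map_sum, lift4_tmul, Psi4_apply] at step2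
  rw [step1, step2]
  have step3 : ∀ j ∈ s, ∑ n ∈ e j, ∑ m ∈ wβ j n,
      (α j n * 𝒮 (d j)) ⊗ₜ[k] (ρ j n m * 𝒮 (σ j n m))
      = (c j * 𝒮 (d j)) ⊗ₜ[k] (1 : H) := by
    intro j _
    have : ∀ n ∈ e j, ∑ m ∈ wβ j n,
        (α j n * 𝒮 (d j)) ⊗ₜ[k] (ρ j n m * 𝒮 (σ j n m))
        = ((ε (β j n) • α j n) * 𝒮 (d j)) ⊗ₜ[k] (1 : H) := by
      intro n _
      rw [← TensorProduct.tmul_sum, rep_mul_antipode (β j n) (wβ j n) (ρ j n) (σ j n) (hβ j n)]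
      rw [TensorProduct.tmul_smul, TensorProduct.smul_tmul', smul_mul_assoc]
    rw [Finset.sum_congr rfl this, ← TensorProduct.sum_tmul, ← Finset.sum_mul,
      rep_counit_right (c j) (e j) (α j) (β j) (hc j)]
  rw [Finset.sum_congr rfl step3, ← TensorProduct.sum_tmul,
    rep_mul_antipode x s c d hx, ← TensorProduct.smul_tmul',
    Algebra.TensorProduct.one_def]

lemma comul_antipode (h : H) : Δ (𝒮 h) = τS (Δ h) := by
  obtain ⟨s, a, b, hab⟩ := exists_rep (k := k) (Δ h)
  choose t c d hb using fun i => exists_rep (k := k) (Δ (b i))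
  choose m u v ha using fun i => exists_rep (k := k) (Δ (a i))
  have step1 : Δ (𝒮 h) = ∑ i ∈ s, Δ (𝒮 (a i)) * (ε (b i) • (1 : H ⊗[k] H)) := by
    conv_lhs => rw [← rep_counit_right h s a b hab]
    rw [map_sum, map_sum]
    refine Finset.sum_congr rfl fun i _ => ?_
    rw [map_smul, map_smul, mul_smul_comm, mul_one]
  have step2 : Δ (𝒮 h) = ∑ i ∈ s, ∑ j ∈ t i, Phi3 (k := k) (a i) (c i j) (d i j) := by
    rw [step1]
    refine Finset.sum_congr rfl fun i _ => ?_
    rw [← conv_mid (b i) (t i) (c i) (d i) (hb i), Finset.mul_sum]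
    refine Finset.sum_congr rfl fun j _ => ?_
    rw [Phi3_apply]
  have zr := Z_right h s a b hab t c d (fun i _ => hb i)
  have zl := Z_left h s a b hab m u v (fun i _ => ha i)
  have swap := congrArg (lift3 (Phi3 (k := k) (H := H))) (zr.symm.trans zl)
  simp only [map_sum, lift3_tmul] at swap
  rw [step2, swap]
  have step4 : ∀ i ∈ s, ∑ n ∈ m i, Phi3 (k := k) (u i n) (v i n) (b i)
      = ε (a i) • τS (Δ (b i)) := by
    intro i _
    have e1 : ∀ n ∈ m i, Phi3 (k := k) (u i n) (v i n) (b i)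
        = (Δ (𝒮 (u i n)) * Δ (v i n)) * τS (Δ (b i)) := by
      intro n _
      rw [Phi3_apply, mul_assoc]
    rw [Finset.sum_congr rfl e1, ← Finset.sum_mul]
    have e2 : ∑ n ∈ m i, Δ (𝒮 (u i n)) * Δ (v i n) = ε (a i) • (1 : H ⊗[k] H) := by
      have : ∀ n ∈ m i, Δ (𝒮 (u i n)) * Δ (v i n) = Δ (𝒮 (u i n) * v i n) := by
        intro n _
        rw [Bialgebra.comul_mul]
      rw [Finset.sum_congr rfl this, ← map_sum,
        rep_antipode_mul (a i) (m i) (u i) (v i) (ha i), map_smul, Bialgebra.comul_one]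
    rw [e2, smul_mul_assoc, one_mul]
  rw [Finset.sum_congr rfl step4]
  rw [show (∑ i ∈ s, ε (a i) • τS (Δ (b i))) = τS (∑ i ∈ s, ε (a i) • Δ (b i)) from by
    rw [map_sum]; exact Finset.sum_congr rfl fun i _ => (map_smul _ _ _).symm]
  rw [show (∑ i ∈ s, ε (a i) • Δ (b i)) = Δ (∑ i ∈ s, ε (a i) • b i) from by
    rw [map_sum]; exact Finset.sum_congr rfl fun i _ => (map_smul _ _ _).symm]
  rw [rep_counit_left h s a b hab]

end Antipode2
section CopAntipode
variable {k H : Type} [Field k] [Ring H] [HopfAlgebra k H]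

local notation "Δ" => (Coalgebra.comul (R := k) (A := H))
local notation "ε" => (Coalgebra.counit (R := k) (A := H))
local notation "𝒮" => (HopfAlgebra.antipode (R := k) (A := H))

variable (Sinv : H →ₗ[k] H)

lemma counit_Sinv (hS2 : ∀ x : H, 𝒮 (Sinv x) = x) (h : H) : ε (Sinv h) = ε h := by
  have := counit_antipode' (k := k) (Sinv h)
  rw [hS2] at this
  exact this.symm

lemma comul_eq_sum_antipode (hS2 : ∀ x : H, 𝒮 (Sinv x) = x) (h : H)
    (s0 : Finset ℕ) (a b : ℕ → H)
    (hab : Δ (Sinv h) = ∑ j ∈ s0, a j ⊗ₜ[k] b j) :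
    Δ h = ∑ j ∈ s0, 𝒮 (b j) ⊗ₜ[k] 𝒮 (a j) := by
  conv_lhs => rw [← hS2 h]
  rw [comul_antipode, hab, map_sum]
  exact Finset.sum_congr rfl fun j _ => τS_tmul _ _

lemma cop_right (hS1 : ∀ x : H, Sinv (𝒮 x) = x) (hS2 : ∀ x : H, 𝒮 (Sinv x) = x)
    (h : H) (s : Finset ℕ) (f g : ℕ → H)
    (hrep : Δ h = ∑ i ∈ s, f i ⊗ₜ[k] g i) :
    ∑ i ∈ s, g i * Sinv (f i) = ε h • 1 := by
  obtain ⟨s0, a, b, hab⟩ := exists_rep (k := k) (Δ (Sinv h))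
  have hh := comul_eq_sum_antipode Sinv hS2 h s0 a b hab
  set χ : H ⊗[k] H →ₗ[k] H :=
    (LinearMap.mul' k H) ∘ₗ (TensorProduct.map LinearMap.id Sinv) ∘ₗ
      (TensorProduct.comm k H H).toLinearMap with hχ
  have hχt : ∀ x y : H, χ (x ⊗ₜ[k] y) = y * Sinv x := by
    intro x y; simp [hχ]
  have h1 : ∑ i ∈ s, g i * Sinv (f i) = χ (Δ h) := by
    rw [hrep, map_sum]
    exact (Finset.sum_congr rfl fun i _ => (hχt (f i) (g i)).symm)
  have h2 : χ (Δ h) = ∑ j ∈ s0, 𝒮 (a j) * b j := by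
    rw [hh, map_sum]
    refine Finset.sum_congr rfl fun j _ => ?_
    rw [hχt, hS1]
  rw [h1, h2, rep_antipode_mul (Sinv h) s0 a b hab, counit_Sinv Sinv hS2]

lemma cop_left (hS1 : ∀ x : H, Sinv (𝒮 x) = x) (hS2 : ∀ x : H, 𝒮 (Sinv x) = x)
    (h : H) (s : Finset ℕ) (f g : ℕ → H)
    (hrep : Δ h = ∑ i ∈ s, f i ⊗ₜ[k] g i) :
    ∑ i ∈ s, Sinv (g i) * f i = ε h • 1 := by
  obtain ⟨s0, a, b, hab⟩ := exists_rep (k := k) (Δ (Sinv h))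
  have hh := comul_eq_sum_antipode Sinv hS2 h s0 a b hab
  set χ : H ⊗[k] H →ₗ[k] H :=
    (LinearMap.mul' k H) ∘ₗ (TensorProduct.map Sinv LinearMap.id) ∘ₗ
      (TensorProduct.comm k H H).toLinearMap with hχ
  have hχt : ∀ x y : H, χ (x ⊗ₜ[k] y) = Sinv y * x := by
    intro x y; simp [hχ]
  have h1 : ∑ i ∈ s, Sinv (g i) * f i = χ (Δ h) := by
    rw [hrep, map_sum]
    exact (Finset.sum_congr rfl fun i _ => (hχt (f i) (g i)).symm)
  have h2 : χ (Δ h) = ∑ j ∈ s0, a j * 𝒮 (b j) := by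
    rw [hh, map_sum]
    refine Finset.sum_congr rfl fun j _ => ?_
    rw [hχt, hS1]
  rw [h1, h2, rep_mul_antipode (Sinv h) s0 a b hab, counit_Sinv Sinv hS2]

end CopAntipode
section Maps
variable {k H A : Type} [Field k] [Ring H] [HopfAlgebra k H] [Ring A] [Algebra k A]
variable (r l : H →ₗ[k] A →ₗ[k] A) (Sinv : H →ₗ[k] H)

noncomputable def PsiA (φ : A) : H →ₗ[k] H →ₗ[k] H →ₗ[k] (A ⊗[k] H) :=
  mk3 (fun x y z => r (z * Sinv y) φ ⊗ₜ[k] x)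
    (fun _ _ _ _ => by simp [TensorProduct.tmul_add])
    (fun _ _ _ _ => by simp [TensorProduct.tmul_smul])
    (fun _ _ _ _ => by
      simp [map_add, LinearMap.add_apply, mul_add, TensorProduct.add_tmul])
    (fun _ _ _ _ => by
      simp [map_smul, LinearMap.smul_apply, mul_smul_comm, TensorProduct.smul_tmul'])
    (fun _ _ _ _ => by
      simp [map_add, LinearMap.add_apply, add_mul, TensorProduct.add_tmul])
    (fun _ _ _ _ => by
      simp [map_smul, LinearMap.smul_apply, smul_mul_assoc, TensorProduct.smul_tmul'])

@[simp] lemma PsiA_apply (φ : A) (x y z : H) :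
    PsiA r Sinv φ x y z = r (z * Sinv y) φ ⊗ₜ[k] x := rfl

noncomputable def PsiB (φ : A) : H →ₗ[k] H →ₗ[k] H →ₗ[k] (A ⊗[k] H) :=
  mk3 (fun x y z => r (Sinv z * y) φ ⊗ₜ[k] x)
    (fun _ _ _ _ => by simp [TensorProduct.tmul_add])
    (fun _ _ _ _ => by simp [TensorProduct.tmul_smul])
    (fun _ _ _ _ => by
      simp [map_add, LinearMap.add_apply, mul_add, TensorProduct.add_tmul])
    (fun _ _ _ _ => by
      simp [map_smul, LinearMap.smul_apply, mul_smul_comm, TensorProduct.smul_tmul'])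
    (fun _ _ _ _ => by
      simp [map_add, LinearMap.add_apply, add_mul, TensorProduct.add_tmul])
    (fun _ _ _ _ => by
      simp [map_smul, LinearMap.smul_apply, smul_mul_assoc, TensorProduct.smul_tmul'])

@[simp] lemma PsiB_apply (φ : A) (x y z : H) :
    PsiB r Sinv φ x y z = r (Sinv z * y) φ ⊗ₜ[k] x := rfl

noncomputable def Wmap (φ φ' : A) (x' y' f' : H) : H →ₗ[k] H →ₗ[k] H →ₗ[k] (A ⊗[k] H) :=
  mk3 (fun w₁ w₂ w₃ => (r (w₃ * x') φ * r y' (l w₁ φ')) ⊗ₜ[k] (w₂ * f'))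
    (fun _ _ _ _ => by
      simp [map_add, LinearMap.add_apply, mul_add, TensorProduct.add_tmul])
    (fun _ _ _ _ => by
      simp [map_smul, LinearMap.smul_apply, mul_smul_comm, TensorProduct.smul_tmul'])
    (fun _ _ _ _ => by
      simp [add_mul, TensorProduct.tmul_add])
    (fun _ _ _ _ => by
      simp [smul_mul_assoc, TensorProduct.tmul_smul])
    (fun _ _ _ _ => by
      simp [map_add, LinearMap.add_apply, add_mul, TensorProduct.add_tmul])
    (fun _ _ _ _ => by
      simp [map_smul, LinearMap.smul_apply, smul_mul_assoc, TensorProduct.smul_tmul'])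

@[simp] lemma Wmap_apply (φ φ' : A) (x' y' f' : H) (w₁ w₂ w₃ : H) :
    Wmap r l φ φ' x' y' f' w₁ w₂ w₃
      = (r (w₃ * x') φ * r y' (l w₁ φ')) ⊗ₜ[k] (w₂ * f') := rfl

noncomputable def Vmap (φ φ' : A) (gg uu vv : H) : H →ₗ[k] H →ₗ[k] H →ₗ[k] (A ⊗[k] H) :=
  mk3 (fun z₁ z₂ z₃ => (r (gg * z₂) φ * r z₃ (l uu φ')) ⊗ₜ[k] (vv * z₁))
    (fun _ _ _ _ => by
      simp [add_mul, mul_add, TensorProduct.tmul_add])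
    (fun _ _ _ _ => by
      simp [smul_mul_assoc, mul_smul_comm, TensorProduct.tmul_smul])
    (fun _ _ _ _ => by
      simp [map_add, LinearMap.add_apply, mul_add, add_mul, TensorProduct.add_tmul])
    (fun _ _ _ _ => by
      simp [map_smul, LinearMap.smul_apply, mul_smul_comm, smul_mul_assoc,
        TensorProduct.smul_tmul'])
    (fun _ _ _ _ => by
      simp [map_add, LinearMap.add_apply, mul_add, TensorProduct.add_tmul])
    (fun _ _ _ _ => by
      simp [map_smul, LinearMap.smul_apply, mul_smul_comm, TensorProduct.smul_tmul'])

@[simp] lemma Vmap_apply (φ φ' : A) (gg uu vv : H) (z₁ z₂ z₃ : H) :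
    Vmap r l φ φ' gg uu vv z₁ z₂ z₃
      = (r (gg * z₂) φ * r z₃ (l uu φ')) ⊗ₜ[k] (vv * z₁) := rfl

noncomputable def Tmap (φ φ' : A) (x' y' f' : H) :
    H →ₗ[k] H →ₗ[k] H →ₗ[k] H →ₗ[k] H →ₗ[k] (A ⊗[k] H) :=
  mk5 (fun w₁ w₂ w₃ w₄ w₅ =>
      (r (w₃ * x') φ * r (Sinv w₅ * (w₄ * y')) (l w₁ φ')) ⊗ₜ[k] (w₂ * f'))
    (fun _ _ _ _ _ _ => by
      simp [map_add, LinearMap.add_apply, mul_add, TensorProduct.add_tmul])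
    (fun _ _ _ _ _ _ => by
      simp [map_smul, LinearMap.smul_apply, mul_smul_comm, TensorProduct.smul_tmul'])
    (fun _ _ _ _ _ _ => by
      simp [add_mul, TensorProduct.tmul_add])
    (fun _ _ _ _ _ _ => by
      simp [smul_mul_assoc, TensorProduct.tmul_smul])
    (fun _ _ _ _ _ _ => by
      simp [map_add, LinearMap.add_apply, add_mul, TensorProduct.add_tmul])
    (fun _ _ _ _ _ _ => by
      simp [map_smul, LinearMap.smul_apply, smul_mul_assoc, TensorProduct.smul_tmul'])
    (fun _ _ _ _ _ _ => by
      simp [map_add, LinearMap.add_apply, add_mul, mul_add, TensorProduct.add_tmul])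
    (fun _ _ _ _ _ _ => by
      simp [map_smul, LinearMap.smul_apply, smul_mul_assoc, mul_smul_comm,
        TensorProduct.smul_tmul'])
    (fun _ _ _ _ _ _ => by
      simp [map_add, LinearMap.add_apply, add_mul, mul_add, TensorProduct.add_tmul])
    (fun _ _ _ _ _ _ => by
      simp [map_smul, LinearMap.smul_apply, smul_mul_assoc, mul_smul_comm,
        TensorProduct.smul_tmul'])

@[simp] lemma Tmap_apply (φ φ' : A) (x' y' f' : H) (w₁ w₂ w₃ w₄ w₅ : H) :
    Tmap r l Sinv φ φ' x' y' f' w₁ w₂ w₃ w₄ w₅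
      = (r (w₃ * x') φ * r (Sinv w₅ * (w₄ * y')) (l w₁ φ')) ⊗ₜ[k] (w₂ * f') := rfl

end Maps
section Reorder
variable {M : Type} [AddCommMonoid M]

lemma reorder6 (s : Finset ℕ) (t : ℕ → Finset ℕ)
    (s' : Finset ℕ) (v : ℕ → ℕ → Finset ℕ) (t' : ℕ → Finset ℕ)
    (e₃ : ℕ → ℕ → ℕ → Finset ℕ)
    (F : ℕ → ℕ → ℕ → ℕ → ℕ → ℕ → M) :
    ∑ i ∈ s, ∑ j ∈ t i, ∑ j' ∈ s', ∑ m ∈ v i j, ∑ e' ∈ t' j', ∑ e ∈ e₃ i j m, F i j j' m e' e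
    = ∑ j' ∈ s', ∑ e' ∈ t' j', ∑ i ∈ s, ∑ j ∈ t i, ∑ m ∈ v i j, ∑ e ∈ e₃ i j m,
        F i j j' m e' e := by
  calc ∑ i ∈ s, ∑ j ∈ t i, ∑ j' ∈ s', ∑ m ∈ v i j, ∑ e' ∈ t' j', ∑ e ∈ e₃ i j m, F i j j' m e' e
      = ∑ i ∈ s, ∑ j ∈ t i, ∑ j' ∈ s', ∑ e' ∈ t' j', ∑ m ∈ v i j, ∑ e ∈ e₃ i j m,
          F i j j' m e' e := by
        refine Finset.sum_congr rfl fun i _ => Finset.sum_congr rfl fun j _ =>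
          Finset.sum_congr rfl fun j' _ => ?_
        exact Finset.sum_comm
    _ = ∑ i ∈ s, ∑ j' ∈ s', ∑ j ∈ t i, ∑ e' ∈ t' j', ∑ m ∈ v i j, ∑ e ∈ e₃ i j m,
          F i j j' m e' e := by
        refine Finset.sum_congr rfl fun i _ => ?_
        exact Finset.sum_comm
    _ = ∑ i ∈ s, ∑ j' ∈ s', ∑ e' ∈ t' j', ∑ j ∈ t i, ∑ m ∈ v i j, ∑ e ∈ e₃ i j m,
          F i j j' m e' e := by
        refine Finset.sum_congr rfl fun i _ => Finset.sum_congr rfl fun j' _ => ?_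
        exact Finset.sum_comm
    _ = ∑ j' ∈ s', ∑ i ∈ s, ∑ e' ∈ t' j', ∑ j ∈ t i, ∑ m ∈ v i j, ∑ e ∈ e₃ i j m,
          F i j j' m e' e := Finset.sum_comm
    _ = ∑ j' ∈ s', ∑ e' ∈ t' j', ∑ i ∈ s, ∑ j ∈ t i, ∑ m ∈ v i j, ∑ e ∈ e₃ i j m,
          F i j j' m e' e := by
        refine Finset.sum_congr rfl fun j' _ => ?_
        exact Finset.sum_comm

lemma reorder4 (s' : Finset ℕ) (t' : ℕ → Finset ℕ) (s : Finset ℕ) (w : ℕ → Finset ℕ)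
    (F : ℕ → ℕ → ℕ → ℕ → M) :
    ∑ j' ∈ s', ∑ e' ∈ t' j', ∑ i ∈ s, ∑ n ∈ w i, F j' e' i n
    = ∑ i ∈ s, ∑ n ∈ w i, ∑ j' ∈ s', ∑ e' ∈ t' j', F j' e' i n := by
  calc ∑ j' ∈ s', ∑ e' ∈ t' j', ∑ i ∈ s, ∑ n ∈ w i, F j' e' i n
      = ∑ j' ∈ s', ∑ i ∈ s, ∑ e' ∈ t' j', ∑ n ∈ w i, F j' e' i n := by
        refine Finset.sum_congr rfl fun j' _ => ?_
        exact Finset.sum_comm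
    _ = ∑ j' ∈ s', ∑ i ∈ s, ∑ n ∈ w i, ∑ e' ∈ t' j', F j' e' i n := by
        refine Finset.sum_congr rfl fun j' _ => Finset.sum_congr rfl fun i _ => ?_
        exact Finset.sum_comm
    _ = ∑ i ∈ s, ∑ j' ∈ s', ∑ n ∈ w i, ∑ e' ∈ t' j', F j' e' i n := Finset.sum_comm
    _ = ∑ i ∈ s, ∑ n ∈ w i, ∑ j' ∈ s', ∑ e' ∈ t' j', F j' e' i n := by
        refine Finset.sum_congr rfl fun i _ => ?_
        exact Finset.sum_comm

end Reorder

/-- `ν(φ ⋈ h) = (φ·h₂) ♮ h₁` is an algebra isomorphism from the diagonal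
crossed product `A ⋈ H` (multiplication `mulD`) to the L-R-smash product `A ♮ H`
(multiplication `mulL`), with inverse `ν'(φ ♮ h) = (φ·S⁻¹(h₂)) ⋈ h₁`. -/
theorem stmt_2 (k H A : Type) [Field k] [Ring H] [HopfAlgebra k H]
    [Ring A] [Algebra k A]
    (l : H →ₗ[k] A →ₗ[k] A)
    (hl_one : ∀ a : A, l 1 a = a)
    (hl_mul : ∀ (h h' : H) (a : A), l (h * h') a = l h (l h' a))
    (hl_unit : ∀ h : H, l h (1 : A) = Coalgebra.counit (R := k) h • (1 : A))
    (hl_meas : ∀ (h : H) (a b : A) (s : Finset ℕ) (f g : ℕ → H),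
      Coalgebra.comul (R := k) h = ∑ i ∈ s, f i ⊗ₜ[k] g i →
      l h (a * b) = ∑ i ∈ s, l (f i) a * l (g i) b)
    (r : H →ₗ[k] A →ₗ[k] A)
    (hr_one : ∀ a : A, r 1 a = a)
    (hr_mul : ∀ (h h' : H) (a : A), r (h * h') a = r h' (r h a))
    (hr_unit : ∀ h : H, r h (1 : A) = Coalgebra.counit (R := k) h • (1 : A))
    (hr_meas : ∀ (h : H) (a b : A) (s : Finset ℕ) (f g : ℕ → H),
      Coalgebra.comul (R := k) h = ∑ i ∈ s, f i ⊗ₜ[k] g i →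
      r h (a * b) = ∑ i ∈ s, r (f i) a * r (g i) b)
    (hcomm : ∀ (h h' : H) (a : A), l h (r h' a) = r h' (l h a))
    (Sinv : H →ₗ[k] H)
    (hSinv1 : ∀ h : H, Sinv (HopfAlgebra.antipode (R := k) h) = h)
    (hSinv2 : ∀ h : H, HopfAlgebra.antipode (R := k) (Sinv h) = h)
    (mulL : (A ⊗[k] H) →ₗ[k] (A ⊗[k] H) →ₗ[k] (A ⊗[k] H))
    (hmulL : ∀ (φ φ' : A) (h h' : H) (s t : Finset ℕ) (f g f' g' : ℕ → H),
      Coalgebra.comul (R := k) h = ∑ i ∈ s, f i ⊗ₜ[k] g i →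
      Coalgebra.comul (R := k) h' = ∑ j ∈ t, f' j ⊗ₜ[k] g' j →
      mulL (φ ⊗ₜ[k] h) (φ' ⊗ₜ[k] h') =
        ∑ i ∈ s, ∑ j ∈ t, (r (g' j) φ * l (f i) φ') ⊗ₜ[k] (g i * f' j))
    (mulD : (A ⊗[k] H) →ₗ[k] (A ⊗[k] H) →ₗ[k] (A ⊗[k] H))
    (hmulD : ∀ (φ φ' : A) (h h' : H) (s : Finset ℕ) (f g e : ℕ → H),
      (TensorProduct.map (LinearMap.id : H →ₗ[k] H) (Coalgebra.comul (R := k))) (Coalgebra.comul (R := k) h) =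
        ∑ i ∈ s, f i ⊗ₜ[k] (g i ⊗ₜ[k] e i) →
      mulD (φ ⊗ₜ[k] h) (φ' ⊗ₜ[k] h') =
        ∑ i ∈ s, (φ * r (Sinv (e i)) (l (f i) φ')) ⊗ₜ[k] (g i * h'))
    (ν ν' : (A ⊗[k] H) →ₗ[k] (A ⊗[k] H))
    (hν : ∀ (φ : A) (h : H) (s : Finset ℕ) (f g : ℕ → H),
      Coalgebra.comul (R := k) h = ∑ i ∈ s, f i ⊗ₜ[k] g i →
      ν (φ ⊗ₜ[k] h) = ∑ i ∈ s, r (g i) φ ⊗ₜ[k] f i)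
    (hν' : ∀ (φ : A) (h : H) (s : Finset ℕ) (f g : ℕ → H),
      Coalgebra.comul (R := k) h = ∑ i ∈ s, f i ⊗ₜ[k] g i →
      ν' (φ ⊗ₜ[k] h) = ∑ i ∈ s, r (Sinv (g i)) φ ⊗ₜ[k] f i) :
    (∀ x y : A ⊗[k] H, ν (mulD x y) = mulL (ν x) (ν y)) ∧
    ν ((1 : A) ⊗ₜ[k] (1 : H)) = (1 : A) ⊗ₜ[k] (1 : H) ∧
    (∀ x : A ⊗[k] H, ν' (ν x) = x) ∧
    (∀ x : A ⊗[k] H, ν (ν' x) = x) := by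
  have comul1 : Coalgebra.comul (R := k) (1 : H)
      = ∑ i ∈ ({0} : Finset ℕ), (1 : H) ⊗ₜ[k] (1 : H) := by
    simp [Algebra.TensorProduct.one_def]
  refine ⟨?_, ?_, ?_, ?_⟩
  · -- multiplicativity
    have pure1 : ∀ (φ φ' : A) (h h' : H),
        ν (mulD (φ ⊗ₜ[k] h) (φ' ⊗ₜ[k] h')) = mulL (ν (φ ⊗ₜ[k] h)) (ν (φ' ⊗ₜ[k] h')) := by
      intro φ φ' h h'
      obtain ⟨s, f, g, hrep⟩ := exists_rep (k := k) (Coalgebra.comul (R := k) h)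
      choose t p q hg using fun i => exists_rep (k := k) (Coalgebra.comul (R := k) (g i))
      choose v c d hp using fun i j => exists_rep (k := k) (Coalgebra.comul (R := k) (p i j))
      choose e₃ al be hd using fun i j m =>
        exists_rep (k := k) (Coalgebra.comul (R := k) (d i j m))
      choose u a b hq using fun i j => exists_rep (k := k) (Coalgebra.comul (R := k) (q i j))
      choose w uu vv hf using fun i => exists_rep (k := k) (Coalgebra.comul (R := k) (f i))
      obtain ⟨s', f', g', hrep'⟩ := exists_rep (k := k) (Coalgebra.comul (R := k) h')
      choose t' x' y' hg' using fun j' => exists_rep (k := k) (Coalgebra.comul (R := k) (g' j'))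
      choose w' uu' vv' hf' using fun j' => exists_rep (k := k) (Coalgebra.comul (R := k) (f' j'))
      -- Step L1 : expand mulD
      obtain ⟨wD, aD, bD, hflatD⟩ := flatten_double s t
      have hmap3 : (TensorProduct.map (LinearMap.id : H →ₗ[k] H) (Coalgebra.comul (R := k)))
          (Coalgebra.comul (R := k) h)
          = ∑ n ∈ wD, f (aD n) ⊗ₜ[k] (p (aD n) (bD n) ⊗ₜ[k] q (aD n) (bD n)) := by
        have hid : (TensorProduct.map (LinearMap.id : H →ₗ[k] H) (Coalgebra.comul (R := k)))
            = LinearMap.lTensor H (Coalgebra.comul (R := k) (A := H)) := rfl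
        rw [hid, Z_right h s f g hrep t p q (fun i _ => hg i)]
        exact hflatD (fun i j => f i ⊗ₜ[k] (p i j ⊗ₜ[k] q i j))
      have L1 : mulD (φ ⊗ₜ[k] h) (φ' ⊗ₜ[k] h')
          = ∑ i ∈ s, ∑ j ∈ t i,
            (φ * r (Sinv (q i j)) (l (f i) φ')) ⊗ₜ[k] (p i j * h') := by
        rw [hmulD φ φ' h h' wD _ _ _ hmap3]
        exact (hflatD (fun i j =>
          (φ * r (Sinv (q i j)) (l (f i) φ')) ⊗ₜ[k] (p i j * h'))).symm
      -- Step L2 : apply ν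
      have L2 : ν (mulD (φ ⊗ₜ[k] h) (φ' ⊗ₜ[k] h'))
          = ∑ i ∈ s, ∑ j ∈ t i, ∑ j' ∈ s', ∑ m ∈ v i j,
            r (d i j m * g' j') (φ * r (Sinv (q i j)) (l (f i) φ'))
              ⊗ₜ[k] (c i j m * f' j') := by
        rw [L1, map_sum]
        refine Finset.sum_congr rfl fun i hi => ?_
        rw [map_sum]
        refine Finset.sum_congr rfl fun j hj => ?_
        obtain ⟨w2, a2, b2, hflat2⟩ := flatten_double s' (fun _ => v i j)
        have hcm : Coalgebra.comul (R := k) (p i j * h')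
            = ∑ n ∈ w2, (c i j (b2 n) * f' (a2 n)) ⊗ₜ[k] (d i j (b2 n) * g' (a2 n)) := by
          rw [Bialgebra.comul_mul, hp i j, hrep', Finset.sum_mul_sum]
          rw [show (∑ m ∈ v i j, ∑ j' ∈ s',
                (c i j m ⊗ₜ[k] d i j m) * (f' j' ⊗ₜ[k] g' j'))
              = ∑ j' ∈ s', ∑ m ∈ v i j,
                (c i j m * f' j') ⊗ₜ[k] (d i j m * g' j') from by
            rw [Finset.sum_comm]
            exact Finset.sum_congr rfl fun j' _ => Finset.sum_congr rfl fun m _ =>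
              Algebra.TensorProduct.tmul_mul_tmul _ _ _ _]
          exact hflat2 (fun j' m => (c i j m * f' j') ⊗ₜ[k] (d i j m * g' j'))
        rw [hν _ _ w2 _ _ hcm]
        exact (hflat2 (fun j' m =>
          r (d i j m * g' j') (φ * r (Sinv (q i j)) (l (f i) φ'))
            ⊗ₜ[k] (c i j m * f' j'))).symm
      -- Step L3 : measuring + module structure
      have L3 : ν (mulD (φ ⊗ₜ[k] h) (φ' ⊗ₜ[k] h'))
          = ∑ i ∈ s, ∑ j ∈ t i, ∑ j' ∈ s', ∑ m ∈ v i j, ∑ e' ∈ t' j', ∑ e ∈ e₃ i j m,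
            (r (al i j m e * x' j' e') φ
              * r (Sinv (q i j) * (be i j m e * y' j' e')) (l (f i) φ'))
              ⊗ₜ[k] (c i j m * f' j') := by
        rw [L2]
        refine Finset.sum_congr rfl fun i _ => Finset.sum_congr rfl fun j _ =>
          Finset.sum_congr rfl fun j' _ => Finset.sum_congr rfl fun m _ => ?_
        obtain ⟨w3, a3, b3, hflat3⟩ := flatten_double (t' j') (fun _ => e₃ i j m)
        have hcm2 : Coalgebra.comul (R := k) (d i j m * g' j')
            = ∑ n ∈ w3,
              (al i j m (b3 n) * x' j' (a3 n)) ⊗ₜ[k] (be i j m (b3 n) * y' j' (a3 n)) := by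
          rw [Bialgebra.comul_mul, hd i j m, hg' j', Finset.sum_mul_sum]
          rw [show (∑ e ∈ e₃ i j m, ∑ e' ∈ t' j',
                (al i j m e ⊗ₜ[k] be i j m e) * (x' j' e' ⊗ₜ[k] y' j' e'))
              = ∑ e' ∈ t' j', ∑ e ∈ e₃ i j m,
                (al i j m e * x' j' e') ⊗ₜ[k] (be i j m e * y' j' e') from by
            rw [Finset.sum_comm]
            exact Finset.sum_congr rfl fun e' _ => Finset.sum_congr rfl fun e _ =>
              Algebra.TensorProduct.tmul_mul_tmul _ _ _ _]
          exact hflat3 (fun e' e =>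
            (al i j m e * x' j' e') ⊗ₜ[k] (be i j m e * y' j' e'))
        rw [hr_meas _ φ _ w3 _ _ hcm2, TensorProduct.sum_tmul,
          ← (hflat3 (fun e' e =>
            (r (al i j m e * x' j' e') φ
              * r (be i j m e * y' j' e') (r (Sinv (q i j)) (l (f i) φ')))
              ⊗ₜ[k] (c i j m * f' j')))]
        refine Finset.sum_congr rfl fun e' _ => Finset.sum_congr rfl fun e _ => ?_
        rw [hr_mul (Sinv (q i j)) (be i j m e * y' j' e') (l (f i) φ')]
      -- Step L5 : coassociativity swap and antipode collapse
      have L5 : ∀ j' ∈ s', ∀ e' ∈ t' j',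
          (∑ i ∈ s, ∑ j ∈ t i, ∑ m ∈ v i j, ∑ e ∈ e₃ i j m,
            (r (al i j m e * x' j' e') φ
              * r (Sinv (q i j) * (be i j m e * y' j' e')) (l (f i) φ'))
              ⊗ₜ[k] (c i j m * f' j'))
          = ∑ i ∈ s, ∑ j ∈ t i,
              (r (q i j * x' j' e') φ * r (y' j' e') (l (f i) φ'))
                ⊗ₜ[k] (p i j * f' j') := by
        intro j' _ e' _
        have key5 := coassoc5 h s f g hrep t p q (fun i _ => hg i) v c d
          (fun i _ j _ => hp i j) e₃ al be (fun i _ j _ m _ => hd i j m)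
          u a b (fun i _ j _ => hq i j)
        have appl := congrArg
          (lift5 (Tmap r l Sinv φ φ' (x' j' e') (y' j' e') (f' j'))) key5
        simp only [map_sum, lift5_tmul, Tmap_apply] at appl
        rw [appl]
        refine Finset.sum_congr rfl fun i _ => ?_
        have coll : ∀ j ∈ t i, ∀ m ∈ v i j,
            (∑ n ∈ u i j,
              (r (d i j m * x' j' e') φ
                * r (Sinv (b i j n) * (a i j n * y' j' e')) (l (f i) φ'))
                ⊗ₜ[k] (c i j m * f' j'))
            = Coalgebra.counit (R := k) (q i j) •
                ((r (d i j m * x' j' e') φ * r (y' j' e') (l (f i) φ'))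
                  ⊗ₜ[k] (c i j m * f' j')) := by
          intro j _ m _
          have harg : (∑ n ∈ u i j, Sinv (b i j n) * (a i j n * y' j' e'))
              = Coalgebra.counit (R := k) (q i j) • y' j' e' := by
            rw [show (∑ n ∈ u i j, Sinv (b i j n) * (a i j n * y' j' e'))
                = (∑ n ∈ u i j, Sinv (b i j n) * a i j n) * y' j' e' from by
              rw [Finset.sum_mul]
              exact Finset.sum_congr rfl fun n _ => (mul_assoc _ _ _).symm]
            rw [cop_left Sinv hSinv1 hSinv2 (q i j) (u i j) (a i j) (b i j) (hq i j),
              smul_mul_assoc, one_mul]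
          rw [← TensorProduct.sum_tmul, ← Finset.mul_sum, ← LinearMap.sum_apply,
            ← map_sum, harg, map_smul, LinearMap.smul_apply, mul_smul_comm,
            ← TensorProduct.smul_tmul']
        rw [Finset.sum_congr rfl
          (fun j hj => Finset.sum_congr rfl (fun m hm => coll j hj m hm))]
        have hULt : ∀ x y : H,
            TensorProduct.lift (Wmap r l φ φ' (x' j' e') (y' j' e') (f' j') (f i))
              (x ⊗ₜ[k] y)
            = (r (y * x' j' e') φ * r (y' j' e') (l (f i) φ')) ⊗ₜ[k] (x * f' j') := by
          intro x y
          rw [TensorProduct.lift.tmul]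
          rfl
        calc ∑ j ∈ t i, ∑ m ∈ v i j, Coalgebra.counit (R := k) (q i j) •
              ((r (d i j m * x' j' e') φ * r (y' j' e') (l (f i) φ'))
                ⊗ₜ[k] (c i j m * f' j'))
            = ∑ j ∈ t i, Coalgebra.counit (R := k) (q i j) •
                (TensorProduct.lift (Wmap r l φ φ' (x' j' e') (y' j' e') (f' j') (f i)))
                  (Coalgebra.comul (R := k) (p i j)) := by
              refine Finset.sum_congr rfl fun j _ => ?_
              rw [← Finset.smul_sum]
              congr 1
              rw [hp i j, map_sum]
              exact Finset.sum_congr rfl fun m _ => (hULt _ _).symm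
          _ = (TensorProduct.lift (Wmap r l φ φ' (x' j' e') (y' j' e') (f' j') (f i)))
                (Coalgebra.comul (R := k) (g i)) := by
              rw [show Coalgebra.comul (R := k) (g i)
                  = ∑ j ∈ t i, Coalgebra.counit (R := k) (q i j) •
                      Coalgebra.comul (R := k) (p i j) from by
                conv_lhs => rw [← rep_counit_right (g i) (t i) (p i) (q i) (hg i)]
                rw [map_sum]
                exact Finset.sum_congr rfl fun j _ => map_smul _ _ _]
              rw [map_sum]
              exact Finset.sum_congr rfl fun j _ => (map_smul _ _ _).symm
          _ = ∑ j ∈ t i,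
              (r (q i j * x' j' e') φ * r (y' j' e') (l (f i) φ'))
                ⊗ₜ[k] (p i j * f' j') := by
              rw [hg i, map_sum]
              exact Finset.sum_congr rfl fun j _ => hULt _ _
      -- Step L6 : swap first-leg presentation
      have L6 : ∀ j' ∈ s', ∀ e' ∈ t' j',
          (∑ i ∈ s, ∑ j ∈ t i,
            (r (q i j * x' j' e') φ * r (y' j' e') (l (f i) φ')) ⊗ₜ[k] (p i j * f' j'))
          = ∑ i ∈ s, ∑ n ∈ w i,
              (r (g i * x' j' e') φ * r (y' j' e') (l (uu i n) φ'))
                ⊗ₜ[k] (vv i n * f' j') := by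
        intro j' _ e' _
        have zr := Z_right h s f g hrep t p q (fun i _ => hg i)
        have zl := Z_left h s f g hrep w uu vv (fun i _ => hf i)
        have appl := congrArg
          (lift3 (Wmap r l φ φ' (x' j' e') (y' j' e') (f' j'))) (zr.symm.trans zl)
        simp only [map_sum, lift3_tmul, Wmap_apply] at appl
        exact appl
      -- RHS
      have R1 : mulL (ν (φ ⊗ₜ[k] h)) (ν (φ' ⊗ₜ[k] h'))
          = ∑ i ∈ s, ∑ j' ∈ s', ∑ n ∈ w i, ∑ n' ∈ w' j',
            (r (g i * vv' j' n') φ * r (g' j') (l (uu i n) φ'))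
              ⊗ₜ[k] (vv i n * uu' j' n') := by
        rw [hν φ h s f g hrep, hν φ' h' s' f' g' hrep',
          map_sum mulL _ s, LinearMap.sum_apply]
        refine Finset.sum_congr rfl fun i _ => ?_
        rw [map_sum]
        refine Finset.sum_congr rfl fun j' _ => ?_
        rw [hmulL (r (g i) φ) (r (g' j') φ') (f i) (f' j') (w i) (w' j')
          (uu i) (vv i) (uu' j') (vv' j') (hf i) (hf' j')]
        refine Finset.sum_congr rfl fun n _ => Finset.sum_congr rfl fun n' _ => ?_
        rw [hr_mul (g i) (vv' j' n') φ, hcomm]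
      have R2 : mulL (ν (φ ⊗ₜ[k] h)) (ν (φ' ⊗ₜ[k] h'))
          = ∑ i ∈ s, ∑ n ∈ w i, ∑ j' ∈ s', ∑ e' ∈ t' j',
            (r (g i * x' j' e') φ * r (y' j' e') (l (uu i n) φ'))
              ⊗ₜ[k] (vv i n * f' j') := by
        rw [R1]
        refine Finset.sum_congr rfl fun i _ => ?_
        rw [Finset.sum_comm]
        refine Finset.sum_congr rfl fun n _ => ?_
        have zr' := Z_right h' s' f' g' hrep' t' x' y' (fun j' _ => hg' j')
        have zl' := Z_left h' s' f' g' hrep' w' uu' vv' (fun j' _ => hf' j')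
        have appl := congrArg
          (lift3 (Vmap r l φ φ' (g i) (uu i n) (vv i n))) (zl'.symm.trans zr')
        simp only [map_sum, lift3_tmul, Vmap_apply] at appl
        exact appl
      -- Assemble
      rw [L3, R2,
        reorder6 s t s' v t' e₃ (fun i j j' m e' e =>
          (r (al i j m e * x' j' e') φ
            * r (Sinv (q i j) * (be i j m e * y' j' e')) (l (f i) φ'))
            ⊗ₜ[k] (c i j m * f' j'))]
      rw [Finset.sum_congr rfl (fun j' hj' => Finset.sum_congr rfl (fun e' he' =>
        (L5 j' hj' e' he').trans (L6 j' hj' e' he')))]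
      exact reorder4 s' t' s w (fun j' e' i n =>
        (r (g i * x' j' e') φ * r (y' j' e') (l (uu i n) φ')) ⊗ₜ[k] (vv i n * f' j'))
    intro x y
    induction x using TensorProduct.induction_on with
    | zero => simp
    | tmul φ h =>
      induction y using TensorProduct.induction_on with
      | zero => simp
      | tmul φ' h' => exact pure1 φ φ' h h'
      | add y₁ y₂ hy₁ hy₂ => simp only [map_add, hy₁, hy₂]
    | add x₁ x₂ hx₁ hx₂ => simp only [map_add, LinearMap.add_apply, hx₁, hx₂]
  · -- unit
    rw [hν 1 1 {0} (fun _ => 1) (fun _ => 1) comul1]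
    simp [hr_one]
  · -- ν' ∘ ν = id
    have pure3 : ∀ (φ : A) (h : H), ν' (ν (φ ⊗ₜ[k] h)) = φ ⊗ₜ[k] h := by
      intro φ h
      obtain ⟨s, f, g, hrep⟩ := exists_rep (k := k) (Coalgebra.comul (R := k) h)
      choose t p q hf using fun i => exists_rep (k := k) (Coalgebra.comul (R := k) (f i))
      choose w x y hg using fun i => exists_rep (k := k) (Coalgebra.comul (R := k) (g i))
      rw [hν φ h s f g hrep, map_sum]
      have e1 : ∀ i ∈ s, ν' (r (g i) φ ⊗ₜ[k] f i)
          = ∑ j ∈ t i, lift3 (PsiA r Sinv φ) (p i j ⊗ₜ[k] (q i j ⊗ₜ[k] g i)) := by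
        intro i _
        rw [hν' (r (g i) φ) (f i) (t i) (p i) (q i) (hf i)]
        refine Finset.sum_congr rfl fun j _ => ?_
        rw [lift3_tmul, PsiA_apply, hr_mul]
      rw [Finset.sum_congr rfl e1]
      have zl := Z_left h s f g hrep t p q (fun i _ => hf i)
      have zr := Z_right h s f g hrep w x y (fun i _ => hg i)
      have swap := congrArg (lift3 (PsiA r Sinv φ)) (zl.symm.trans zr)
      simp only [map_sum] at swap
      rw [swap]
      have e2 : ∀ i ∈ s, ∑ m ∈ w i, lift3 (PsiA r Sinv φ) (f i ⊗ₜ[k] (x i m ⊗ₜ[k] y i m))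
          = φ ⊗ₜ[k] (Coalgebra.counit (R := k) (g i) • f i) := by
        intro i _
        have e3 : ∀ m ∈ w i, lift3 (PsiA r Sinv φ) (f i ⊗ₜ[k] (x i m ⊗ₜ[k] y i m))
            = r (y i m * Sinv (x i m)) φ ⊗ₜ[k] f i := fun m _ => by
          rw [lift3_tmul, PsiA_apply]
        rw [Finset.sum_congr rfl e3, ← TensorProduct.sum_tmul]
        have hsum : (∑ m ∈ w i, r (y i m * Sinv (x i m)) φ)
            = Coalgebra.counit (R := k) (g i) • φ := by
          rw [← LinearMap.sum_apply, ← map_sum,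
            cop_right Sinv hSinv1 hSinv2 (g i) (w i) (x i) (y i) (hg i),
            map_smul, LinearMap.smul_apply, hr_one]
        rw [hsum, TensorProduct.smul_tmul]
      rw [Finset.sum_congr rfl e2, ← TensorProduct.tmul_sum, rep_counit_right h s f g hrep]
    intro z
    induction z using TensorProduct.induction_on with
    | zero => simp
    | tmul φ h => exact pure3 φ h
    | add u v hu hv => rw [map_add, map_add, hu, hv]
  · -- ν ∘ ν' = id
    have pure4 : ∀ (φ : A) (h : H), ν (ν' (φ ⊗ₜ[k] h)) = φ ⊗ₜ[k] h := by
      intro φ h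
      obtain ⟨s, f, g, hrep⟩ := exists_rep (k := k) (Coalgebra.comul (R := k) h)
      choose t p q hf using fun i => exists_rep (k := k) (Coalgebra.comul (R := k) (f i))
      choose w x y hg using fun i => exists_rep (k := k) (Coalgebra.comul (R := k) (g i))
      rw [hν' φ h s f g hrep, map_sum]
      have e1 : ∀ i ∈ s, ν (r (Sinv (g i)) φ ⊗ₜ[k] f i)
          = ∑ j ∈ t i, lift3 (PsiB r Sinv φ) (p i j ⊗ₜ[k] (q i j ⊗ₜ[k] g i)) := by
        intro i _
        rw [hν (r (Sinv (g i)) φ) (f i) (t i) (p i) (q i) (hf i)]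
        refine Finset.sum_congr rfl fun j _ => ?_
        rw [lift3_tmul, PsiB_apply, hr_mul]
      rw [Finset.sum_congr rfl e1]
      have zl := Z_left h s f g hrep t p q (fun i _ => hf i)
      have zr := Z_right h s f g hrep w x y (fun i _ => hg i)
      have swap := congrArg (lift3 (PsiB r Sinv φ)) (zl.symm.trans zr)
      simp only [map_sum] at swap
      rw [swap]
      have e2 : ∀ i ∈ s, ∑ m ∈ w i, lift3 (PsiB r Sinv φ) (f i ⊗ₜ[k] (x i m ⊗ₜ[k] y i m))
          = φ ⊗ₜ[k] (Coalgebra.counit (R := k) (g i) • f i) := by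
        intro i _
        have e3 : ∀ m ∈ w i, lift3 (PsiB r Sinv φ) (f i ⊗ₜ[k] (x i m ⊗ₜ[k] y i m))
            = r (Sinv (y i m) * x i m) φ ⊗ₜ[k] f i := fun m _ => by
          rw [lift3_tmul, PsiB_apply]
        rw [Finset.sum_congr rfl e3, ← TensorProduct.sum_tmul]
        have hsum : (∑ m ∈ w i, r (Sinv (y i m) * x i m) φ)
            = Coalgebra.counit (R := k) (g i) • φ := by
          rw [← LinearMap.sum_apply, ← map_sum,
            cop_left Sinv hSinv1 hSinv2 (g i) (w i) (x i) (y i) (hg i),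
            map_smul, LinearMap.smul_apply, hr_one]
        rw [hsum, TensorProduct.smul_tmul]
      rw [Finset.sum_congr rfl e2, ← TensorProduct.tmul_sum, rep_counit_right h s f g hrep]
    intro z
    induction z using TensorProduct.induction_on with
    | zero => simp
    | tmul φ h => exact pure4 φ h
    | add u v hu hv => rw [map_add, map_add, hu, hv]
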